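/- Let p ∈ U be such that C(p) is bounded, and let i ∈ [n]. Then the set of nonempty subsets I ⊆ [n] such that G[I] and G[V∖I] are both connected and (1/|I|)·e_I ∈ C̄(p) is nonempty, and D_i(p) equals the maximum of ε_I(i) over all such subsets I. (In other words, the monomial label of the bounded cell containing p in its relative interior, defined as the componentwise maximum of the labels ε_I of its 0-cells, has i-th exponent equal to the number of edges ij of G with p_i > p_j.) -/

import Mathlib

open Finset

/-- The vertex-induced subgraph on `S` of the multigraph with edge-multiplicity
function `μ` is connected: any two vertices of `S` are joined by a walk inside `S`. -/
def ConnectedOn {n : ℕ} (μ : Fin (n + 1) → Fin (n + 1) → ℕ) (S : Set (Fin (n + 1))) : Prop :=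
  ∀ i ∈ S, ∀ j ∈ S, Relation.ReflTransGen (fun a b => a ∈ S ∧ b ∈ S ∧ 1 ≤ μ a b) i j

/-- The affine subspace `U = { x ∈ ℝ^{n+1} : x_{n+1} = 0, x_1 + ⋯ + x_n = 1 }`. -/
def U (n : ℕ) : Set (Fin (n + 1) → ℝ) :=
  {x | x (Fin.last n) = 0 ∧ ∑ i : Fin n, x i.castSucc = 1}

/-- The open cell of `p` in the restriction of the graphical arrangement of `μ` to `U`. -/
def openCell {n : ℕ} (μ : Fin (n + 1) → Fin (n + 1) → ℕ) (p : Fin (n + 1) → ℝ) :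
    Set (Fin (n + 1) → ℝ) :=
  {q | q ∈ U n ∧ ∀ i j, 1 ≤ μ i j →
    ((q i < q j ↔ p i < p j) ∧ (q i = q j ↔ p i = p j))}

/-- The closed cell of `p` in the restriction of the graphical arrangement of `μ` to `U`. -/
def closedCell {n : ℕ} (μ : Fin (n + 1) → Fin (n + 1) → ℕ) (p : Fin (n + 1) → ℝ) :
    Set (Fin (n + 1) → ℝ) :=
  {q | q ∈ U n ∧ ∀ i j, 1 ≤ μ i j →
    ((p i < p j → q i ≤ q j) ∧ (p i = p j → q i = q j))}

/-- `p`-equivalence: `i ∼_p j` iff there is a path in the graph along which `p` is constant. -/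
def pEquiv {n : ℕ} (μ : Fin (n + 1) → Fin (n + 1) → ℕ) (p : Fin (n + 1) → ℝ)
    (i j : Fin (n + 1)) : Prop :=
  Relation.ReflTransGen (fun a b => 1 ≤ μ a b ∧ p a = p b) i j

/-- `d_I(i)`: the number of edges from vertex `i` to the complement of `I`. -/
def dI {n : ℕ} (μ : Fin (n + 1) → Fin (n + 1) → ℕ) (I : Finset (Fin (n + 1)))
    (i : Fin (n + 1)) : ℕ :=
  ∑ j ∈ Iᶜ, μ i j

/-- `ε_I(i) = d_I(i)` for `i ∈ I` and `0` otherwise. -/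
def epsI {n : ℕ} (μ : Fin (n + 1) → Fin (n + 1) → ℕ) (I : Finset (Fin (n + 1)))
    (i : Fin (n + 1)) : ℕ :=
  if i ∈ I then dI μ I i else 0

/-- The point `(1/|I|) · e_I`, where `e_I` is the 0/1 indicator vector of `I`. -/
noncomputable def qI {n : ℕ} (I : Finset (Fin (n + 1))) : Fin (n + 1) → ℝ :=
  fun i => if i ∈ I then 1 / (I.card : ℝ) else 0

/-- `D_i(p)`: the number of edges `ij` with `p_i > p_j`. -/
noncomputable def Dlab {n : ℕ} (μ : Fin (n + 1) → Fin (n + 1) → ℕ) (p : Fin (n + 1) → ℝ) (i : Fin n) : ℕ :=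
  ∑ j ∈ Finset.univ.filter (fun j => p j < p i.castSucc), μ i.castSucc j

/-- The monomial `m_I = ∏_{i ∈ [n]} x_i^{ε_I(i)}`. -/
noncomputable def mI {n : ℕ} (k : Type*) [Field k] (μ : Fin (n + 1) → Fin (n + 1) → ℕ)
    (I : Finset (Fin (n + 1))) : MvPolynomial (Fin n) k :=
  ∏ i : Fin n, MvPolynomial.X i ^ epsI μ I i.castSucc

/-- The monomial ideal `M_G = ⟨ m_I : ∅ ≠ I ⊆ [n] ⟩`. -/
noncomputable def MG {n : ℕ} (k : Type*) [Field k] (μ : Fin (n + 1) → Fin (n + 1) → ℕ) :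
    Ideal (MvPolynomial (Fin n) k) :=
  Ideal.span {f | ∃ I : Finset (Fin (n + 1)), I.Nonempty ∧ Fin.last n ∉ I ∧ f = mI k μ I}

namespace Stmt3Aux

variable {n : ℕ} (μ : Fin (n + 1) → Fin (n + 1) → ℕ) (p : Fin (n + 1) → ℝ)

/-- `Reach a b`: there is an edge path from `a` to `b` along which `p` is nondecreasing. -/
def Reach (a b : Fin (n + 1)) : Prop :=
  Relation.ReflTransGen (fun x y => 1 ≤ μ x y ∧ p x ≤ p y) a b

variable {μ p}

lemma Reach.le {a b : Fin (n+1)} (h : Reach μ p a b) : p a ≤ p b := by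
  induction h with
  | refl => exact le_refl _
  | tail _ h ih => exact ih.trans h.2

open Classical in
/-- The set of vertices reachable from `c` by a `p`-nondecreasing edge path. -/
noncomputable def Iup (μ : Fin (n + 1) → Fin (n + 1) → ℕ) (p : Fin (n + 1) → ℝ)
    (c : Fin (n + 1)) : Finset (Fin (n + 1)) :=
  Finset.univ.filter (fun j => Reach μ p c j)

lemma mem_Iup {c j : Fin (n+1)} : j ∈ Iup μ p c ↔ Reach μ p c j := by
  simp [Iup]

lemma self_mem_Iup {c : Fin (n+1)} : c ∈ Iup μ p c := mem_Iup.2 .refl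

lemma Iup_upclosed {c a b : Fin (n+1)} (ha : a ∈ Iup μ p c) (hμ : 1 ≤ μ a b)
    (hpab : p a ≤ p b) : b ∈ Iup μ p c :=
  mem_Iup.2 ((mem_Iup.1 ha).tail ⟨hμ, hpab⟩)

lemma le_of_mem_Iup {c j : Fin (n+1)} (h : j ∈ Iup μ p c) : p c ≤ p j :=
  (mem_Iup.1 h).le

lemma step_symm {S : Set (Fin (n+1))} (hsym : ∀ i j, μ i j = μ j i) :
    Symmetric (fun a b => a ∈ S ∧ b ∈ S ∧ 1 ≤ μ a b) := by
  intro a b ⟨h1, h2, h3⟩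
  exact ⟨h2, h1, by rw [hsym]; exact h3⟩

lemma walk_in_Iup {c j : Fin (n+1)} (h : Reach μ p c j) :
    Relation.ReflTransGen
      (fun a b => a ∈ (↑(Iup μ p c) : Set (Fin (n+1))) ∧
        b ∈ (↑(Iup μ p c) : Set (Fin (n+1))) ∧ 1 ≤ μ a b) c j := by
  induction h with
  | refl => exact .refl
  | @tail b j hcb hbj ih =>
      exact ih.tail ⟨by simpa using mem_Iup.2 hcb,
        by simpa using mem_Iup.2 (hcb.tail hbj), hbj.1⟩

lemma connectedOn_Iup (hsym : ∀ i j, μ i j = μ j i) (c : Fin (n+1)) :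
    ConnectedOn μ (↑(Iup μ p c) : Set (Fin (n+1))) := by
  intro a ha b hb
  have hwa := walk_in_Iup (μ := μ) (p := p) (mem_Iup.1 (by simpa using ha))
  have hwb := walk_in_Iup (μ := μ) (p := p) (mem_Iup.1 (by simpa using hb))
  exact Relation.ReflTransGen.trans (Relation.ReflTransGen.mono (fun x y h => step_symm hsym h) _ _
    (Relation.ReflTransGen.swap _ _ hwa)) hwb

lemma walk_in_compl {c a j : Fin (n+1)} (h : Reach μ p a j)
    (ha : a ∉ Iup μ p c) (hj : j ∉ Iup μ p c) :
    Relation.ReflTransGen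
      (fun x y => x ∈ (↑(Iup μ p c) : Set (Fin (n+1)))ᶜ ∧
        y ∈ (↑(Iup μ p c) : Set (Fin (n+1)))ᶜ ∧ 1 ≤ μ x y) a j := by
  induction h with
  | refl => exact .refl
  | @tail b j hab hbj ih =>
      have hb : b ∉ Iup μ p c := fun hbI => hj (Iup_upclosed hbI hbj.1 hbj.2)
      exact (ih hb).tail ⟨by simpa using hb, by simpa using hj, hbj.1⟩

lemma connectedOn_Iup_compl (hsym : ∀ i j, μ i j = μ j i)
    (hR : ∀ j, Reach μ p (Fin.last n) j) (c : Fin (n+1))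
    (hlast : Fin.last n ∉ Iup μ p c) :
    ConnectedOn μ (↑(Iup μ p c) : Set (Fin (n+1)))ᶜ := by
  intro a ha b hb
  have ha' : a ∉ Iup μ p c := by simpa using ha
  have hb' : b ∉ Iup μ p c := by simpa using hb
  have hwa := walk_in_compl (μ := μ) (p := p) (hR a) hlast ha'
  have hwb := walk_in_compl (μ := μ) (p := p) (hR b) hlast hb'
  exact Relation.ReflTransGen.trans (Relation.ReflTransGen.mono (fun x y h => step_symm hsym h) _ _
    (Relation.ReflTransGen.swap _ _ hwa)) hwb

lemma qI' {I : Finset (Fin (n+1))} {x : Fin (n+1)} :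
    (fun i => if i ∈ I then 1 / (I.card : ℝ) else 0) x
      = if x ∈ I then 1 / (I.card : ℝ) else 0 := rfl

lemma qI_mem_U {I : Finset (Fin (n+1))} (hne : I.Nonempty) (hlast : Fin.last n ∉ I) :
    (fun i => if i ∈ I then 1 / (I.card : ℝ) else 0) ∈ U n := by
  constructor
  · simp [hlast]
  · have h1 : ∑ x : Fin (n+1), (if x ∈ I then 1 / (I.card : ℝ) else 0) = 1 := by
      rw [Finset.sum_ite_mem, Finset.univ_inter, Finset.sum_const, nsmul_eq_mul]
      rw [mul_one_div, div_self]
      exact_mod_cast Finset.card_ne_zero_of_mem hne.choose_spec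
    rw [Fin.sum_univ_castSucc] at h1
    simpa [hlast] using h1

lemma qI_Iup_mem_closedCell (hsym : ∀ i j, μ i j = μ j i) {c : Fin (n+1)}
    (hlast : Fin.last n ∉ Iup μ p c) :
    (fun i => if i ∈ Iup μ p c then 1 / ((Iup μ p c).card : ℝ) else 0)
      ∈ closedCell μ p := by
  set I := Iup μ p c with hI
  have hcard : (0:ℝ) ≤ 1 / (I.card : ℝ) := by positivity
  refine ⟨qI_mem_U ⟨c, self_mem_Iup⟩ hlast, fun a b hμ => ⟨fun hab => ?_, fun hab => ?_⟩⟩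
  · by_cases ha : a ∈ I
    · have hb : b ∈ I := Iup_upclosed ha hμ hab.le
      simp [ha, hb]
    · simp only [ha, if_false]
      split <;> simp [hcard]
  · have hiff : (a ∈ I) = (b ∈ I) := by
      have hμ' : 1 ≤ μ b a := by rw [hsym b a]; exact hμ
      exact propext ⟨fun h => Iup_upclosed h hμ hab.le,
        fun h => Iup_upclosed h hμ' hab.ge⟩
    simp only [hiff]

lemma unbounded_ray (hsym : ∀ i j, μ i j = μ j i) (hp : p ∈ U n)
    (A D : Finset (Fin (n+1))) (hA : A.Nonempty) (hD : D.Nonempty)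
    (hdisj : ∀ x, x ∈ A → x ∉ D)
    (hlA : Fin.last n ∉ A) (hlD : Fin.last n ∉ D)
    (hup : ∀ a b, 1 ≤ μ a b → p a ≤ p b → a ∈ A → b ∈ A)
    (hdown : ∀ a b, 1 ≤ μ a b → p a ≤ p b → b ∈ D → a ∈ D) :
    ¬ Bornology.IsBounded (openCell μ p) := by
  intro hbd
  classical
  set v : Fin (n+1) → ℝ :=
    fun x => if x ∈ A then (D.card : ℝ) else if x ∈ D then -(A.card : ℝ) else 0 with hv
  have hDpos : (0:ℝ) < D.card := by exact_mod_cast Finset.card_pos.2 hD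
  have hApos : (0:ℝ) < A.card := by exact_mod_cast Finset.card_pos.2 hA
  have hmono : ∀ a b, 1 ≤ μ a b → p a ≤ p b → v a ≤ v b := by
    intro a b hμ hab
    by_cases haA : a ∈ A
    · simp [hv, haA, hup a b hμ hab haA]
    · by_cases hbA : b ∈ A
      · by_cases haD : a ∈ D <;> simp [hv, haA, hbA, haD] <;> linarith
      · by_cases haD : a ∈ D
        · by_cases hbD : b ∈ D <;> simp [hv, haA, hbA, haD, hbD] <;> linarith
        · have hbD : b ∉ D := fun hbD => haD (hdown a b hμ hab hbD)
          simp [hv, haA, hbA, haD, hbD]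
  have hvlast : v (Fin.last n) = 0 := by simp [hv, hlA, hlD]
  have hsumall : ∑ x : Fin (n+1), v x = 0 := by
    have hvx : ∀ x, v x = (if x ∈ A then (D.card:ℝ) else 0)
        + (if x ∈ D then -(A.card:ℝ) else 0) := by
      intro x
      by_cases hxA : x ∈ A
      · simp [hv, hxA, hdisj x hxA]
      · by_cases hxD : x ∈ D <;> simp [hv, hxA, hxD]
    simp only [hvx]
    rw [Finset.sum_add_distrib, Finset.sum_ite_mem, Finset.sum_ite_mem,
      Finset.univ_inter, Finset.univ_inter, Finset.sum_const, Finset.sum_const,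
      nsmul_eq_mul, nsmul_eq_mul]
    ring
  have hsum : ∑ k : Fin n, v k.castSucc = 0 := by
    rw [Fin.sum_univ_castSucc, hvlast] at hsumall
    linarith
  have hray : ∀ t : ℝ, 0 ≤ t → (fun x => p x + t * v x) ∈ openCell μ p := by
    intro t ht
    have heq : ∀ a b, 1 ≤ μ a b → p a = p b → v a = v b := by
      intro a b hμ hab
      have hμ' : 1 ≤ μ b a := by rw [hsym b a]; exact hμ
      exact le_antisymm (hmono a b hμ hab.le) (hmono b a hμ' hab.ge)
    refine ⟨⟨by simp [hp.1, hvlast], ?_⟩, ?_⟩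
    · rw [Finset.sum_add_distrib, ← Finset.mul_sum, hsum, hp.2]
      ring
    · intro a b hμ
      show (p a + t * v a < p b + t * v b ↔ p a < p b) ∧
        (p a + t * v a = p b + t * v b ↔ p a = p b)
      have hμ' : 1 ≤ μ b a := by rw [hsym b a]; exact hμ
      have h1 : p a < p b → p a + t * v a < p b + t * v b := by
        intro h
        have hv1 := hmono a b hμ h.le
        nlinarith
      have h1' : p b < p a → p b + t * v b < p a + t * v a := by
        intro h
        have hv1 := hmono b a hμ' h.le
        nlinarith
      have h2 : p a = p b → p a + t * v a = p b + t * v b := by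
        intro h
        rw [h, heq a b hμ h]
      constructor
      · constructor
        · intro h
          rcases lt_trichotomy (p a) (p b) with h' | h' | h'
          · exact h'
          · exact absurd (h2 h') (ne_of_lt h)
          · exact absurd (h1' h') (by linarith)
        · exact h1
      · constructor
        · intro h
          rcases lt_trichotomy (p a) (p b) with h' | h' | h'
          · exact absurd (h1 h') (by rw [h]; exact lt_irrefl _)
          · exact h'
          · exact absurd (h1' h') (by rw [h]; exact lt_irrefl _)
        · exact h2
  obtain ⟨C, hC⟩ := isBounded_iff_forall_norm_le.1 hbd
  obtain ⟨a, haA⟩ := hA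
  have hva : v a = D.card := by simp [hv, haA]
  have hCp : 0 ≤ C :=
    le_trans (norm_nonneg p) (hC p ⟨hp, fun i j _ => ⟨Iff.rfl, Iff.rfl⟩⟩)
  set t := (C + |p a| + 1) / (D.card : ℝ) with hT
  have ht : 0 ≤ t := by positivity
  have hq := hC _ (hray t ht)
  have hqa : |p a + t * v a| ≤ ‖(fun x => p x + t * v x : Fin (n+1) → ℝ)‖ := by
    simpa using norm_le_pi_norm (fun x => p x + t * v x : Fin (n+1) → ℝ) a
  have htv : t * v a = C + |p a| + 1 := by
    rw [hva, hT]
    field_simp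
  have h1 : p a + t * v a ≤ C := le_trans (le_abs_self _) (le_trans hqa hq)
  have h2 : -|p a| ≤ p a := neg_abs_le _
  linarith

lemma reach_last (hsym : ∀ i j, μ i j = μ j i) (hconn : ConnectedOn μ Set.univ)
    (hp : p ∈ U n) (hbd : Bornology.IsBounded (openCell μ p)) :
    ∀ j, Reach μ p (Fin.last n) j := by
  by_contra hcon
  push_neg at hcon
  obtain ⟨j0, hj0⟩ := hcon
  classical
  have hw : ∃ w, ¬ Reach μ p w (Fin.last n) := by
    by_contra hall
    push_neg at hall
    have hle : ∀ x : Fin (n+1), p x ≤ 0 := fun x => by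
      have := (hall x).le
      rwa [hp.1] at this
    have : (1:ℝ) ≤ 0 := by
      rw [← hp.2]
      exact Finset.sum_nonpos (fun k _ => hle _)
    linarith
  obtain ⟨w, hw⟩ := hw
  set A0 := Iup μ p w with hA0
  set D' : Finset (Fin (n+1)) := univ.filter (fun k => Reach μ p k j0) with hD'
  have hmemD' : ∀ k, k ∈ D' ↔ Reach μ p k j0 := by intro k; simp [hD']
  have hlA0 : Fin.last n ∉ A0 := fun h => hw (mem_Iup.1 h)
  have hlD' : Fin.last n ∉ D' := fun h => hj0 ((hmemD' _).1 h)
  have hupA0 : ∀ a b, 1 ≤ μ a b → p a ≤ p b → a ∈ A0 → b ∈ A0 :=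
    fun a b h1 h2 ha => Iup_upclosed ha h1 h2
  have hdownD' : ∀ a b, 1 ≤ μ a b → p a ≤ p b → b ∈ D' → a ∈ D' :=
    fun a b h1 h2 hb => (hmemD' a).2 (Relation.ReflTransGen.head ⟨h1, h2⟩ ((hmemD' b).1 hb))
  by_cases hDA : (D' \ A0).Nonempty
  · exact unbounded_ray hsym hp A0 (D' \ A0) ⟨w, self_mem_Iup⟩ hDA
      (fun x hx hx2 => (Finset.mem_sdiff.1 hx2).2 hx) hlA0
      (fun h => hlD' (Finset.mem_sdiff.1 h).1) hupA0
      (fun a b h1 h2 hb => Finset.mem_sdiff.2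
        ⟨hdownD' a b h1 h2 (Finset.mem_sdiff.1 hb).1,
          fun haA0 => (Finset.mem_sdiff.1 hb).2 (hupA0 a b h1 h2 haA0)⟩) hbd
  · have hsub : D' ⊆ A0 := by
      intro x hx
      by_contra hxA
      exact hDA ⟨x, Finset.mem_sdiff.2 ⟨hx, hxA⟩⟩
    by_cases hAD : (A0 \ D').Nonempty
    · exact unbounded_ray hsym hp (A0 \ D') D' hAD ⟨j0, (hmemD' j0).2 .refl⟩
        (fun x hx => (Finset.mem_sdiff.1 hx).2)
        (fun h => hlA0 (Finset.mem_sdiff.1 h).1) hlD'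
        (fun a b h1 h2 ha => Finset.mem_sdiff.2
          ⟨hupA0 a b h1 h2 (Finset.mem_sdiff.1 ha).1,
            fun hbD => (Finset.mem_sdiff.1 ha).2 (hdownD' a b h1 h2 hbD)⟩)
        hdownD' hbd
    · have hsub2 : A0 ⊆ D' := by
        intro x hx
        by_contra hxD
        exact hAD ⟨x, Finset.mem_sdiff.2 ⟨hx, hxD⟩⟩
      have hstep : ∀ a b, 1 ≤ μ a b → a ∈ A0 → b ∈ A0 := by
        intro a b h1 ha
        rcases le_total (p a) (p b) with h2 | h2
        · exact hupA0 a b h1 h2 ha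
        · have h1' : 1 ≤ μ b a := by rw [hsym b a]; exact h1
          exact hsub (hdownD' b a h1' h2 (hsub2 ha))
      have hwalkA0 : ∀ {x y : Fin (n+1)},
          Relation.ReflTransGen
            (fun a b => a ∈ Set.univ ∧ b ∈ Set.univ ∧ 1 ≤ μ a b) x y →
          x ∈ A0 → y ∈ A0 := by
        intro x y h
        induction h with
        | refl => exact id
        | tail _ hs ih => exact fun hx => hstep _ _ hs.2.2 (ih hx)
      exact hlA0 (hwalkA0 (hconn j0 (Set.mem_univ _) (Fin.last n) (Set.mem_univ _))
        (hsub ((hmemD' j0).2 .refl)))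

lemma epsI_key {I : Finset (Fin (n+1))} (hne : I.Nonempty)
    (hcl : qI I ∈ closedCell μ p) {c j : Fin (n+1)} (hc : c ∈ I) (hj : j ∉ I)
    (hμ : 1 ≤ μ c j) : p j < p c := by
  have hpos : (0:ℝ) < 1 / (I.card : ℝ) := by
    have : 0 < I.card := Finset.card_pos.2 hne
    positivity
  have hqc : qI I c = 1 / (I.card : ℝ) := if_pos hc
  have hqj : qI I j = 0 := if_neg hj
  rcases lt_trichotomy (p j) (p c) with h | h | h
  · exact h
  · have := (hcl.2 c j hμ).2 h.symm
    rw [hqc, hqj] at this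
    linarith
  · have := (hcl.2 c j hμ).1 h
    rw [hqc, hqj] at this
    linarith

lemma dI_eq_sum_ite {I : Finset (Fin (n+1))} (c : Fin (n+1)) :
    dI μ I c = ∑ j : Fin (n+1), if j ∈ I then 0 else μ c j := by
  unfold dI
  rw [← Finset.univ_inter Iᶜ, ← Finset.sum_ite_mem]
  exact Finset.sum_congr rfl fun j _ => by
    by_cases hj : j ∈ I <;> simp [hj]

lemma Dlab_eq_sum_ite (i : Fin n) :
    Dlab μ p i = ∑ j : Fin (n+1), if p j < p i.castSucc then μ i.castSucc j else 0 := by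
  unfold Dlab
  rw [Finset.sum_filter]

lemma epsI_le {I : Finset (Fin (n+1))} (hne : I.Nonempty)
    (hcl : qI I ∈ closedCell μ p) (i : Fin n) :
    epsI μ I i.castSucc ≤ Dlab μ p i := by
  unfold epsI
  split
  · next hc =>
    rw [dI_eq_sum_ite, Dlab_eq_sum_ite]
    apply Finset.sum_le_sum
    intro j _
    by_cases hμj : 1 ≤ μ i.castSucc j
    · by_cases hj : j ∈ I
      · simp [hj]
      · simp [hj, epsI_key hne hcl hc hj hμj]
    · have h0 : μ i.castSucc j = 0 := by omega
      simp [h0]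
  · exact Nat.zero_le _

lemma epsI_Iup_eq (hR : ∀ j, Reach μ p (Fin.last n) j) (c : Fin (n+1)) :
    epsI μ (Iup μ p c) c = ∑ j ∈ Finset.univ.filter (fun j => p j < p c), μ c j := by
  rw [epsI, if_pos (self_mem_Iup), dI_eq_sum_ite, Finset.sum_filter]
  apply Finset.sum_congr rfl
  intro j _
  by_cases hμj : 1 ≤ μ c j
  · by_cases hj : j ∈ Iup μ p c
    · simp [hj, not_lt.2 (le_of_mem_Iup hj)]
    · have hlt : p j < p c := by
        by_contra h
        push_neg at h
        exact hj (mem_Iup.2 (Relation.ReflTransGen.single ⟨hμj, h⟩))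
      simp [hj, hlt]
  · have h0 : μ c j = 0 := by omega
    simp [h0]

end Stmt3Aux

open Stmt3Aux in
/-- for bounded `C(p)` and `i ∈ [n]`, the 0-cells `(1/|I|)e_I` of the
bounded complex lying in the closed cell of `p` form a nonempty family, and `D_i(p)`
is the maximum of `ε_I(i)` over this family. -/
theorem stmt3 {n : ℕ} (hn : 1 ≤ n) (μ : Fin (n + 1) → Fin (n + 1) → ℕ)
    (hsym : ∀ i j, μ i j = μ j i) (hloop : ∀ i, μ i i = 0)
    (hconn : ConnectedOn μ Set.univ)
    (p : Fin (n + 1) → ℝ) (hp : p ∈ U n)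
    (hbd : Bornology.IsBounded (openCell μ p)) (i : Fin n) :
    (∃ I : Finset (Fin (n + 1)), I.Nonempty ∧ Fin.last n ∉ I ∧
        ConnectedOn μ (I : Set (Fin (n + 1))) ∧
        ConnectedOn μ ((I : Set (Fin (n + 1)))ᶜ) ∧ qI I ∈ closedCell μ p) ∧
    IsGreatest {c : ℕ | ∃ I : Finset (Fin (n + 1)), I.Nonempty ∧ Fin.last n ∉ I ∧
        ConnectedOn μ (I : Set (Fin (n + 1))) ∧
        ConnectedOn μ ((I : Set (Fin (n + 1)))ᶜ) ∧ qI I ∈ closedCell μ p ∧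
        c = epsI μ I i.castSucc}
      (Dlab μ p i) := by
  classical
  have hR : ∀ j, Reach μ p (Fin.last n) j := reach_last hsym hconn hp hbd
  have hpos : ∀ x, 0 ≤ p x := fun x => by
    have := (hR x).le
    rwa [hp.1] at this
  have hqIdef : ∀ c : Fin (n+1), qI (Iup μ p c) =
      (fun i => if i ∈ Iup μ p c then 1 / ((Iup μ p c).card : ℝ) else 0) := fun c => rfl
  have hvalid : ∀ c : Fin (n+1), 0 < p c →
      (Iup μ p c).Nonempty ∧ Fin.last n ∉ Iup μ p c ∧
      ConnectedOn μ (↑(Iup μ p c) : Set (Fin (n+1))) ∧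
      ConnectedOn μ ((↑(Iup μ p c) : Set (Fin (n+1)))ᶜ) ∧
      qI (Iup μ p c) ∈ closedCell μ p := by
    intro c hc
    have hlastc : Fin.last n ∉ Iup μ p c := fun h => by
      have := le_of_mem_Iup h
      rw [hp.1] at this
      linarith
    exact ⟨⟨c, self_mem_Iup⟩, hlastc, connectedOn_Iup hsym c,
      connectedOn_Iup_compl hsym hR c hlastc,
      (hqIdef c) ▸ qI_Iup_mem_closedCell hsym hlastc⟩
  have hv0 : ∃ k : Fin n, 0 < p k.castSucc := by
    by_contra hall
    push_neg at hall
    have : (1:ℝ) ≤ 0 := by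
      rw [← hp.2]
      exact Finset.sum_nonpos fun k _ => hall k
    linarith
  obtain ⟨k0, hk0⟩ := hv0
  obtain ⟨h1, h2, h3, h4, h5⟩ := hvalid k0.castSucc hk0
  constructor
  · exact ⟨Iup μ p k0.castSucc, h1, h2, h3, h4, h5⟩
  · constructor
    · by_cases hci : 0 < p i.castSucc
      · obtain ⟨g1, g2, g3, g4, g5⟩ := hvalid i.castSucc hci
        exact ⟨Iup μ p i.castSucc, g1, g2, g3, g4, g5, (epsI_Iup_eq hR i.castSucc).symm⟩
      · have hc0 : p i.castSucc = 0 := le_antisymm (not_lt.1 hci) (hpos _)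
        have hD0 : Dlab μ p i = 0 := by
          rw [Dlab_eq_sum_ite]
          apply Finset.sum_eq_zero
          intro j _
          have : ¬ p j < p i.castSucc := not_lt.2 (hc0 ▸ hpos j)
          simp [this]
        have hnotmem : i.castSucc ∉ Iup μ p k0.castSucc := fun h => by
          have := le_of_mem_Iup h
          rw [hc0] at this
          linarith
        refine ⟨Iup μ p k0.castSucc, h1, h2, h3, h4, h5, ?_⟩
        rw [hD0, epsI, if_neg hnotmem]
    · rintro x ⟨I, hne, -, -, -, hcl, rfl⟩
      exact epsI_le hne hcl i
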